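/- Let Γ be a finite simple graph with vertices weighted by positive integers p_i, and suppose all vertex weights are such that we work with the monoid algebra: the algebra A(Γ) = k⟨x_i : i ∈ V⟩/([x_{a_j}, x_{b_j}] : j ∈ E) where all commutators are taken with sign +1 (i.e., relations x_a x_b = x_b x_a for each edge) has Hilbert series equal to the multiplicative inverse of the clique polynomial c_Γ(z) = Σ_{i,j} (−1)^i c_{i,j} z^j, where c_{i,j} is the number of complete subgraphs of Γ with i vertices whose weights sum to j. -/

import Mathlib

open scoped Classical

/-- The commutation relations on the free algebra determined by the edges of a
graph: `x_a x_b = x_b x_a` whenever `a` and `b` are adjacent. -/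
def commRel (k : Type*) [Field k] {n : ℕ} (G : SimpleGraph (Fin n)) :
    FreeAlgebra k (Fin n) → FreeAlgebra k (Fin n) → Prop := fun u v =>
  ∃ a b : Fin n, G.Adj a b ∧ u = FreeAlgebra.ι k a * FreeAlgebra.ι k b ∧
    v = FreeAlgebra.ι k b * FreeAlgebra.ι k a

/-- The algebra `A(Γ) = k⟨x_i⟩/(x_a x_b − x_b x_a, ab ∈ E)`. -/
abbrev GraphAlgebra (k : Type*) [Field k] {n : ℕ} (G : SimpleGraph (Fin n)) :=
  RingQuot (commRel k G)

/-- The degree-`d` component of the quotient algebra, with respect to the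
grading in which `x_i` has degree `p i`: the span of the images of the
monomials of weight `d`. -/
noncomputable def degComp (k : Type*) [Field k] {n : ℕ} (G : SimpleGraph (Fin n))
    (p : Fin n → ℕ) (d : ℕ) : Submodule k (GraphAlgebra k G) :=
  Submodule.span k {a | ∃ l : List (Fin n), (l.map p).sum = d ∧
    a = RingQuot.mkAlgHom k (commRel k G) ((l.map (FreeAlgebra.ι k)).prod)}

/-- The Hilbert series of `A(Γ)`. -/
noncomputable def hilbertSeries (k : Type*) [Field k] {n : ℕ} (G : SimpleGraph (Fin n))
    (p : Fin n → ℕ) : PowerSeries ℤ :=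
  PowerSeries.mk fun d => (Module.finrank k (degComp k G p d) : ℤ)

/-- The clique polynomial `c_Γ(z) = Σ_{i,j} (−1)^i c_{i,j} z^j`, where `c_{i,j}`
is the number of complete subgraphs of `Γ` with `i` vertices whose weights sum
to `j`, as a power series. -/
noncomputable def cliquePoly {n : ℕ} (G : SimpleGraph (Fin n)) (p : Fin n → ℕ) :
    PowerSeries ℤ :=
  PowerSeries.mk fun j =>
    ∑ S ∈ (Finset.univ : Finset (Fin n)).powerset.filter (fun S : Finset (Fin n) => G.IsClique (S : Set (Fin n))),
      if ∑ i ∈ S, p i = j then (-1 : ℤ) ^ S.card else 0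

namespace CF
variable {n : ℕ} (G : SimpleGraph (Fin n))
def tCon : Con (FreeMonoid (Fin n)) :=
  conGen fun x y => ∃ a b : Fin n, G.Adj a b ∧
    x = FreeMonoid.of a * FreeMonoid.of b ∧ y = FreeMonoid.of b * FreeMonoid.of a
abbrev Trace := (tCon G).Quotient
def mkT : FreeMonoid (Fin n) →* Trace G := (tCon G).mk'
def pr (a b : Fin n) : Fin n → Bool := fun c => decide (c = a ∨ c = b)
def projCon : Con (FreeMonoid (Fin n)) where
  r x y := ∀ a b : Fin n, (a = b ∨ ¬ G.Adj a b) →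
    (FreeMonoid.toList x).filter (pr a b) = (FreeMonoid.toList y).filter (pr a b)
  iseqv := ⟨fun _ _ _ _ => rfl, fun h a b hd => (h a b hd).symm,
    fun h h' a b hd => (h a b hd).trans (h' a b hd)⟩
  mul' := by
    intro w x y z h h' a b hd
    simp only [FreeMonoid.toList_mul, List.filter_append, h a b hd, h' a b hd]
lemma tCon_le_projCon : tCon G ≤ projCon G := by
  apply Con.conGen_le.2
  rintro x y ⟨a, b, hadj, rfl, rfl⟩ c d hd
  have hab : a ≠ b := hadj.ne
  show List.filter (pr c d) [a, b] = List.filter (pr c d) [b, a]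
  by_cases ha : pr c d a <;> by_cases hb : pr c d b <;>
    simp only [List.filter, ha, hb] <;> try rfl
  -- both true: impossible
  exfalso
  simp only [pr, decide_eq_true_eq] at ha hb
  rcases hd with rfl | hnadj
  · rcases ha with rfl | rfl <;> rcases hb with rfl | rfl <;> exact hab rfl
  · rcases ha with rfl | rfl <;> rcases hb with rfl | rfl
    · exact hab rfl
    · exact hnadj hadj
    · exact hnadj hadj.symm
    · exact hab rfl

lemma exists_split {a : Fin n} : ∀ {l : List (Fin n)}, a ∈ l →
    ∃ u v, l = u ++ a :: v ∧ a ∉ u := by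
  intro l hl
  induction l with
  | nil => cases hl
  | cons b t ih =>
      by_cases hba : b = a
      · exact ⟨[], t, by rw [hba]; rfl, by simp⟩
      · rcases ih (by rcases List.mem_cons.1 hl with h | h; exact absurd h.symm hba; exact h) with
          ⟨u, v, rfl, hnu⟩
        exact ⟨b :: u, v, rfl, by simp [hnu, Ne.symm hba]⟩

lemma swapout {b : Fin n} : ∀ (u : List (Fin n)) (v : List (Fin n)),
    (∀ c ∈ u, G.Adj b c) →
    tCon G (FreeMonoid.ofList (u ++ b :: v)) (FreeMonoid.ofList (b :: (u ++ v))) := by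
  intro u
  induction u with
  | nil => intro v _; exact (tCon G).refl _
  | cons c u ih =>
      intro v hadj
      have h1 : tCon G (FreeMonoid.ofList (c :: (u ++ b :: v)))
          (FreeMonoid.ofList (c :: b :: (u ++ v))) := by
        have := (tCon G).mul ((tCon G).refl (FreeMonoid.of c))
          (ih v (fun x hx => hadj x (List.mem_cons_of_mem _ hx)))
        simpa using this
      have h2 : tCon G (FreeMonoid.ofList (c :: b :: (u ++ v)))
          (FreeMonoid.ofList (b :: c :: (u ++ v))) := by
        have hg : tCon G (FreeMonoid.of c * FreeMonoid.of b)
            (FreeMonoid.of b * FreeMonoid.of c) :=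
          ConGen.Rel.of _ _ ⟨c, b, (hadj c (List.mem_cons_self)).symm, rfl, rfl⟩
        have := (tCon G).mul hg ((tCon G).refl (FreeMonoid.ofList (u ++ v)))
        simpa [mul_assoc] using this
      exact (tCon G).trans h1 h2

lemma proj_eq_tCon : ∀ (l l' : List (Fin n)),
    (∀ a b : Fin n, (a = b ∨ ¬ G.Adj a b) → l.filter (pr a b) = l'.filter (pr a b)) →
    tCon G (FreeMonoid.ofList l) (FreeMonoid.ofList l') := by
  intro l
  induction l with
  | nil =>
      intro l' h
      cases l' with
      | nil => exact (tCon G).refl _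
      | cons c t =>
          exfalso
          have := h c c (Or.inl rfl)
          rw [List.filter_cons_of_pos (by simp [pr])] at this
          simp at this
  | cons a l₁ ih =>
      intro l' h
      have hal' : a ∈ l' := by
        have := h a a (Or.inl rfl)
        rw [List.filter_cons_of_pos (by simp [pr])] at this
        have : a ∈ l'.filter (pr a a) := this ▸ List.mem_cons_self
        exact (List.mem_filter.1 this).1
      obtain ⟨u, v, rfl, hu⟩ := exists_split hal'
      -- elements of u commute with a
      have hadj : ∀ c ∈ u, G.Adj a c := by
        intro c hc
        by_contra hnadj
        have hca : c ≠ a := fun e => hu (e ▸ hc)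
        have heq := h a c (Or.inr hnadj)
        rw [List.filter_cons_of_pos (by simp [pr]), List.filter_append,
          List.filter_cons_of_pos (by simp [pr])] at heq
        cases hfu : u.filter (pr a c) with
        | nil =>
            rw [hfu] at heq
            have : c ∈ u.filter (pr a c) := List.mem_filter.2 ⟨hc, by simp [pr]⟩
            rw [hfu] at this; cases this
        | cons d t =>
            rw [hfu] at heq
            have hd : d ∈ u := (List.mem_filter.1 (hfu ▸ (List.mem_cons_self : d ∈ d :: t))).1
            have : a = d := by simpa using congrArg List.head? heq
            exact hu (this ▸ hd)
      have key : ∀ a' b' : Fin n, (a' = b' ∨ ¬ G.Adj a' b') →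
          l₁.filter (pr a' b') = (u ++ v).filter (pr a' b') := by
        intro a' b' hd
        have heq := h a' b' hd
        rw [List.filter_append]
        by_cases hpa : pr a' b' a
        · rw [List.filter_cons_of_pos hpa, List.filter_append,
            List.filter_cons_of_pos hpa] at heq
          have hfu : u.filter (pr a' b') = [] := by
            cases hfu : u.filter (pr a' b') with
            | nil => rfl
            | cons d t =>
                rw [hfu] at heq
                have hd : d ∈ u := (List.mem_filter.1 (hfu ▸ (List.mem_cons_self : d ∈ d :: t))).1
                have : a = d := by simpa using congrArg List.head? heq
                exact absurd (this ▸ hd) hu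
          rw [hfu] at heq ⊢
          simpa using heq
        · rw [List.filter_cons_of_neg (by simpa using hpa), List.filter_append,
            List.filter_cons_of_neg (by simpa using hpa)] at heq
          exact heq
      have ih' := ih (u ++ v) key
      have step1 : tCon G (FreeMonoid.ofList (a :: l₁)) (FreeMonoid.ofList (a :: (u ++ v))) := by
        have := (tCon G).mul ((tCon G).refl (FreeMonoid.of a)) ih'
        simpa using this
      exact (tCon G).trans step1 ((tCon G).symm (swapout G u v hadj))
-- ######## part 3 #########

lemma tCon_iff (l l' : List (Fin n)) :
    tCon G (FreeMonoid.ofList l) (FreeMonoid.ofList l') ↔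
      ∀ a b : Fin n, (a = b ∨ ¬ G.Adj a b) → l.filter (pr a b) = l'.filter (pr a b) :=
  ⟨fun h => tCon_le_projCon G h, proj_eq_tCon G l l'⟩

lemma cancel_cons {a : Fin n} {l l' : List (Fin n)}
    (h : tCon G (FreeMonoid.ofList (a :: l)) (FreeMonoid.ofList (a :: l'))) :
    tCon G (FreeMonoid.ofList l) (FreeMonoid.ofList l') := by
  rw [tCon_iff] at h ⊢
  intro a' b' hd
  have := h a' b' hd
  by_cases hpa : pr a' b' a
  · rw [List.filter_cons_of_pos hpa, List.filter_cons_of_pos hpa] at this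
    exact List.tail_eq_of_cons_eq this
  · rw [List.filter_cons_of_neg (by simpa using hpa),
      List.filter_cons_of_neg (by simpa using hpa)] at this
    exact this

lemma front_analysis {a b : Fin n} {l m : List (Fin n)}
    (h : tCon G (FreeMonoid.ofList (a :: l)) (FreeMonoid.ofList (b :: m)))
    (hne : b ≠ a) :
    G.Adj a b ∧ ∃ l', tCon G (FreeMonoid.ofList l) (FreeMonoid.ofList (b :: l')) := by
  rw [tCon_iff] at h
  have hadj : G.Adj a b := by
    by_contra hnadj
    have heq := h a b (Or.inr hnadj)
    rw [List.filter_cons_of_pos (by simp [pr]), List.filter_cons_of_pos (by simp [pr])] at heq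
    have : a = b := by simpa using congrArg List.head? heq
    exact hne this.symm
  have hbl : b ∈ l := by
    have heq := h b b (Or.inl rfl)
    rw [List.filter_cons_of_neg (by simp [pr, hne.symm]),
      List.filter_cons_of_pos (by simp [pr])] at heq
    have : b ∈ l.filter (pr b b) := heq ▸ List.mem_cons_self
    exact (List.mem_filter.1 this).1
  obtain ⟨u, v, rfl, hu⟩ := exists_split hbl
  have hadju : ∀ c ∈ u, G.Adj b c := by
    intro c hc
    by_cases hca : c = a
    · exact hca ▸ hadj.symm
    by_contra hnadj
    have hcb : c ≠ b := fun e => hu (e ▸ hc)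
    have heq := h b c (Or.inr hnadj)
    rw [List.filter_cons_of_neg (by simp [pr, hne.symm, Ne.symm hca]),
      List.filter_cons_of_pos (by simp [pr]), List.filter_append,
      List.filter_cons_of_pos (by simp [pr])] at heq
    cases hfu : u.filter (pr b c) with
    | nil =>
        rw [hfu] at heq
        have : c ∈ u.filter (pr b c) := List.mem_filter.2 ⟨hc, by simp [pr]⟩
        rw [hfu] at this; cases this
    | cons d t =>
        rw [hfu] at heq
        have hd : d ∈ u := (List.mem_filter.1 (hfu ▸ (List.mem_cons_self : d ∈ d :: t))).1
        have : d = b := by simpa using congrArg List.head? heq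
        exact hu (this ▸ hd)
  exact ⟨hadj, u ++ v, swapout G u v hadju⟩

variable (p : Fin n → ℕ)

def wHom : FreeMonoid (Fin n) →* Multiplicative ℕ :=
  FreeMonoid.lift (fun i => Multiplicative.ofAdd (p i))

lemma tCon_le_ker : tCon G ≤ Con.ker (wHom p) := by
  apply Con.conGen_le.2
  rintro x y ⟨a, b, _, rfl, rfl⟩
  rw [Con.ker_rel]
  simp [wHom, mul_comm]

def wT : Trace G →* Multiplicative ℕ := Con.lift _ (wHom p) (tCon_le_ker G p)

def w (t : Trace G) : ℕ := Multiplicative.toAdd (wT G p t)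

lemma wHom_ofList (l : List (Fin n)) :
    wHom p (FreeMonoid.ofList l) = Multiplicative.ofAdd ((l.map p).sum) := by
  induction l with
  | nil => simp [wHom]
  | cons a l ih =>
      rw [FreeMonoid.ofList_cons, map_mul, ih,
        show wHom p (FreeMonoid.of a) = Multiplicative.ofAdd (p a) from
          FreeMonoid.lift_eval_of _ _, ← ofAdd_add]
      simp

lemma w_mk (l : List (Fin n)) : w G p (mkT G (FreeMonoid.ofList l)) = (l.map p).sum := by
  rw [w, wT, mkT, Con.lift_mk', wHom_ofList]; rfl

lemma w_mul (s t : Trace G) : w G p (s * t) = w G p s + w G p t := by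
  simp [w, map_mul]

lemma exists_rep (t : Trace G) : ∃ l : List (Fin n), t = mkT G (FreeMonoid.ofList l) := by
  obtain ⟨x, rfl⟩ := Con.mk'_surjective t
  exact ⟨FreeMonoid.toList x, rfl⟩

def Front (a : Fin n) (t : Trace G) : Prop := ∃ t', t = mkT G (FreeMonoid.of a) * t'

lemma length_le_weight (hp : ∀ i, 0 < p i) (l : List (Fin n)) :
    l.length ≤ (l.map p).sum := by
  induction l with
  | nil => simp
  | cons a l ih =>
      simp only [List.map_cons, List.sum_cons, List.length_cons]
      have := hp a; omega

lemma finite_w_eq (hp : ∀ i, 0 < p i) (d : ℕ) : {t : Trace G | w G p t = d}.Finite := by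
  apply Set.Finite.subset
    (Set.Finite.image (fun l => mkT G (FreeMonoid.ofList l)) (List.finite_length_le (α := Fin n) (n := d)))
  rintro t ht
  obtain ⟨l, rfl⟩ := exists_rep G t
  refine ⟨l, ?_, rfl⟩
  simp only [Set.mem_setOf_eq] at ht ⊢
  rw [w_mk] at ht
  exact le_trans (length_le_weight p hp l) (le_of_eq ht)

-- ######## part 4: trace-level lemmas #########

lemma mkT_eq_iff {l l' : List (Fin n)} :
    mkT G (FreeMonoid.ofList l) = mkT G (FreeMonoid.ofList l') ↔
      tCon G (FreeMonoid.ofList l) (FreeMonoid.ofList l') := by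
  simp only [mkT, Con.coe_mk']
  exact Con.eq _

lemma mkT_cons (a : Fin n) (l : List (Fin n)) :
    mkT G (FreeMonoid.ofList (a :: l)) = mkT G (FreeMonoid.of a) * mkT G (FreeMonoid.ofList l) := by
  rw [FreeMonoid.ofList_cons]; exact map_mul (mkT G) _ _

lemma cancelT {a : Fin n} {t t' : Trace G}
    (h : mkT G (FreeMonoid.of a) * t = mkT G (FreeMonoid.of a) * t') : t = t' := by
  obtain ⟨l, rfl⟩ := exists_rep G t
  obtain ⟨l', rfl⟩ := exists_rep G t'
  rw [← mkT_cons, ← mkT_cons, mkT_eq_iff] at h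
  rw [mkT_eq_iff]
  exact cancel_cons G h

lemma frontT_analysis {a b : Fin n} {t s : Trace G}
    (h : mkT G (FreeMonoid.of a) * t = mkT G (FreeMonoid.of b) * s) (hne : b ≠ a) :
    G.Adj a b ∧ Front G b t := by
  obtain ⟨l, rfl⟩ := exists_rep G t
  obtain ⟨m, rfl⟩ := exists_rep G s
  rw [← mkT_cons, ← mkT_cons, mkT_eq_iff] at h
  obtain ⟨hadj, l', hl'⟩ := front_analysis G h hne
  refine ⟨hadj, mkT G (FreeMonoid.ofList l'), ?_⟩
  rw [← mkT_cons, mkT_eq_iff]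
  exact hl'

lemma front_mul {a b : Fin n} {t : Trace G} (hadj : G.Adj a b) (h : Front G b t) :
    Front G b (mkT G (FreeMonoid.of a) * t) := by
  obtain ⟨s, rfl⟩ := h
  refine ⟨mkT G (FreeMonoid.of a) * s, ?_⟩
  rw [← mul_assoc, ← mul_assoc, ← map_mul, ← map_mul]
  congr 1
  exact (Con.eq _).2 (ConGen.Rel.of _ _ ⟨a, b, hadj, rfl, rfl⟩)

lemma front_self_mul {a : Fin n} (t : Trace G) : Front G a (mkT G (FreeMonoid.of a) * t) :=
  ⟨t, rfl⟩

lemma exists_front {t : Trace G} (h : w G p t ≠ 0) : ∃ a, Front G a t := by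
  obtain ⟨l, rfl⟩ := exists_rep G t
  cases l with
  | nil => exact absurd (w_mk G p []) (by simpa using h)
  | cons a l => exact ⟨a, mkT G (FreeMonoid.ofList l), mkT_cons G a l⟩

-- ######## part 5: algebra maps and dimension #########

variable (k : Type*) [Field k]

def mu : FreeMonoid (Fin n) →* GraphAlgebra k G :=
  FreeMonoid.lift (fun i => RingQuot.mkAlgHom k (commRel k G) (FreeAlgebra.ι k i))

lemma mu_ofList (l : List (Fin n)) :
    mu G k (FreeMonoid.ofList l) =
      RingQuot.mkAlgHom k (commRel k G) ((l.map (FreeAlgebra.ι k)).prod) := by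
  induction l with
  | nil => simp
  | cons a l ih =>
      rw [FreeMonoid.ofList_cons, map_mul, ih, List.map_cons, List.prod_cons, map_mul,
        show mu G k (FreeMonoid.of a) = RingQuot.mkAlgHom k (commRel k G) (FreeAlgebra.ι k a)
          from FreeMonoid.lift_eval_of _ _]

lemma tCon_le_ker_mu : tCon G ≤ Con.ker (mu G k) := by
  apply Con.conGen_le.2
  rintro x y ⟨a, b, hadj, rfl, rfl⟩
  rw [Con.ker_rel]
  simp only [map_mul, FreeMonoid.lift_eval_of, mu]
  rw [← map_mul, ← map_mul]
  exact RingQuot.mkAlgHom_rel k ⟨a, b, hadj, rfl, rfl⟩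

def muT : Trace G →* GraphAlgebra k G := Con.lift _ (mu G k) (tCon_le_ker_mu G k)

lemma muT_mkT (x : FreeMonoid (Fin n)) : muT G k (mkT G x) = mu G k x :=
  Con.lift_mk' _ _

noncomputable def baseHom : FreeAlgebra k (Fin n) →ₐ[k] MonoidAlgebra k (Trace G) :=
  FreeAlgebra.lift k (fun i => MonoidAlgebra.of k (Trace G) (mkT G (FreeMonoid.of i)))

lemma mkT_eq {x y : FreeMonoid (Fin n)} (h : tCon G x y) : mkT G x = mkT G y := by
  simp only [mkT, Con.coe_mk']
  exact (Con.eq _).2 h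

lemma baseHom_rel : ∀ ⦃x y⦄, commRel k G x y → baseHom G k x = baseHom G k y := by
  rintro x y ⟨a, b, hadj, rfl, rfl⟩
  simp only [map_mul, baseHom, FreeAlgebra.lift_ι_apply]
  rw [← map_mul, ← map_mul, ← map_mul, ← map_mul]
  exact congrArg _ (mkT_eq G (ConGen.Rel.of _ _ ⟨a, b, hadj, rfl, rfl⟩))

noncomputable def phi : GraphAlgebra k G →ₐ[k] MonoidAlgebra k (Trace G) :=
  RingQuot.liftAlgHom k ⟨baseHom G k, baseHom_rel G k⟩

lemma phi_mu (l : List (Fin n)) :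
    phi G k (mu G k (FreeMonoid.ofList l)) =
      MonoidAlgebra.single (mkT G (FreeMonoid.ofList l)) (1 : k) := by
  induction l with
  | nil =>
      rw [FreeMonoid.ofList_nil, map_one, map_one, map_one]
      exact MonoidAlgebra.one_def
  | cons a l ih =>
      rw [FreeMonoid.ofList_cons, map_mul, map_mul, ih]
      have h1 : mu G k (FreeMonoid.of a) =
          RingQuot.mkAlgHom k (commRel k G) (FreeAlgebra.ι k a) := FreeMonoid.lift_eval_of _ _
      rw [h1, phi, RingQuot.liftAlgHom_mkAlgHom_apply]
      have h2 : baseHom G k (FreeAlgebra.ι k a) =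
          MonoidAlgebra.single (mkT G (FreeMonoid.of a)) (1 : k) := FreeAlgebra.lift_ι_apply _ _
      rw [h2, MonoidAlgebra.single_mul_single, one_mul, ← map_mul, ← FreeMonoid.ofList_cons]

lemma phi_muT (t : Trace G) : phi G k (muT G k t) = MonoidAlgebra.single t (1 : k) := by
  obtain ⟨l, rfl⟩ := exists_rep G t
  rw [muT_mkT, phi_mu]

variable (p : Fin n → ℕ)

noncomputable def Tfin (hp : ∀ i, 0 < p i) (d : ℕ) : Finset (Trace G) :=
  (finite_w_eq G p hp d).toFinset

lemma mem_Tfin {hp : ∀ i, 0 < p i} {d : ℕ} {t : Trace G} :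
    t ∈ Tfin G p hp d ↔ w G p t = d := Set.Finite.mem_toFinset _

lemma muT_mem_degComp {d : ℕ} {t : Trace G} (ht : w G p t = d) :
    muT G k t ∈ degComp k G p d := by
  obtain ⟨l, rfl⟩ := exists_rep G t
  rw [w_mk] at ht
  exact Submodule.subset_span ⟨l, ht, by rw [muT_mkT, mu_ofList]⟩

lemma degComp_eq_span (d : ℕ) :
    degComp k G p d = Submodule.span k ((muT G k) '' {t : Trace G | w G p t = d}) := by
  unfold degComp
  congr 1
  ext a
  constructor
  · rintro ⟨l, hl, rfl⟩
    exact ⟨mkT G (FreeMonoid.ofList l), by rw [Set.mem_setOf_eq, w_mk]; exact hl,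
      by rw [muT_mkT, mu_ofList]⟩
  · rintro ⟨t, ht, rfl⟩
    obtain ⟨l, rfl⟩ := exists_rep G t
    rw [Set.mem_setOf_eq, w_mk] at ht
    exact ⟨l, ht, by rw [muT_mkT, mu_ofList]⟩

lemma indep_B (hp : ∀ i, 0 < p i) (d : ℕ) :
    LinearIndependent k (fun t : (Tfin G p hp d : Finset (Trace G)) => muT G k t.1) := by
  apply LinearIndependent.of_comp (phi G k).toLinearMap
  have hcomp : ((phi G k).toLinearMap ∘ fun t : (Tfin G p hp d : Finset (Trace G)) => muT G k t.1)
      = fun t : (Tfin G p hp d : Finset (Trace G)) =>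
        (MonoidAlgebra.basis (Trace G) k) t.1 := by
    funext t
    simp only [Function.comp_apply, AlgHom.toLinearMap_apply, phi_muT,
      MonoidAlgebra.basis_apply]
  rw [hcomp]
  exact (MonoidAlgebra.basis (Trace G) k).linearIndependent.comp
    Subtype.val Subtype.val_injective

lemma finrank_degComp (hp : ∀ i, 0 < p i) (d : ℕ) :
    Module.finrank k (degComp k G p d) = (Tfin G p hp d).card := by
  have hrange : Set.range (fun t : (Tfin G p hp d : Finset (Trace G)) => muT G k t.1)
      = (muT G k) '' {t : Trace G | w G p t = d} := by
    ext x
    constructor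
    · rintro ⟨t, rfl⟩
      exact ⟨t.1, (mem_Tfin G p).1 t.2, rfl⟩
    · rintro ⟨t, ht, rfl⟩
      exact ⟨⟨t, (mem_Tfin G p).2 ht⟩, rfl⟩
  rw [degComp_eq_span, ← hrange, finrank_span_eq_card (indep_B G k p hp d),
    Fintype.card_coe]

-- ######## part 6: involution #########

lemma w_of (a : Fin n) : w G p (mkT G (FreeMonoid.of a)) = p a := by
  have := w_mk G p [a]
  rw [FreeMonoid.ofList_singleton] at this
  simpa using this

lemma w_one : w G p (1 : Trace G) = 0 := by simp [w]

lemma eq_one_of_w_zero {t : Trace G} (hp : ∀ i, 0 < p i) (h : w G p t = 0) : t = 1 := by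
  obtain ⟨l, rfl⟩ := exists_rep G t
  rw [w_mk] at h
  cases l with
  | nil => exact map_one _
  | cons a l => simp only [List.map_cons, List.sum_cons] at h; have := hp a; omega

noncomputable def eligSet (S : Finset (Fin n)) (t : Trace G) : Finset (Fin n) :=
  Finset.univ.filter (fun a => a ∈ S ∨ (Front G a t ∧ ∀ b ∈ S, G.Adj a b))

lemma mem_eligSet {S : Finset (Fin n)} {t : Trace G} {a : Fin n} :
    a ∈ eligSet G S t ↔ a ∈ S ∨ (Front G a t ∧ ∀ b ∈ S, G.Adj a b) := by
  simp [eligSet]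

noncomputable def pop (a : Fin n) (t : Trace G) : Trace G :=
  if h : Front G a t then h.choose else t

lemma pop_spec {a : Fin n} {t : Trace G} (h : Front G a t) :
    t = mkT G (FreeMonoid.of a) * pop G a t := by
  rw [pop, dif_pos h]
  exact h.choose_spec

noncomputable def gfun (x : Finset (Fin n) × Trace G) : Finset (Fin n) × Trace G :=
  if h : (eligSet G x.1 x.2).Nonempty then
    if (eligSet G x.1 x.2).min' h ∈ x.1 then
      (x.1.erase ((eligSet G x.1 x.2).min' h),
        mkT G (FreeMonoid.of ((eligSet G x.1 x.2).min' h)) * x.2)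
    else (insert ((eligSet G x.1 x.2).min' h) x.1, pop G ((eligSet G x.1 x.2).min' h) x.2)
  else x

noncomputable def cliquesF : Finset (Finset (Fin n)) :=
  (Finset.univ : Finset (Fin n)).powerset.filter
    (fun S : Finset (Fin n) => G.IsClique (S : Set (Fin n)))

lemma mem_cliquesF {S : Finset (Fin n)} : S ∈ cliquesF G ↔ G.IsClique (S : Set (Fin n)) := by
  simp [cliquesF]

noncomputable def TfinLe (hp : ∀ i, 0 < p i) (d : ℕ) : Finset (Trace G) :=
  (Finset.range (d + 1)).biUnion (fun e => Tfin G p hp e)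

lemma mem_TfinLe {hp : ∀ i, 0 < p i} {d : ℕ} {t : Trace G} :
    t ∈ TfinLe G p hp d ↔ w G p t ≤ d := by
  simp only [TfinLe, Finset.mem_biUnion, Finset.mem_range, mem_Tfin]
  constructor
  · rintro ⟨e, he, rfl⟩; omega
  · intro h; exact ⟨w G p t, by omega, rfl⟩

noncomputable def Fset (hp : ∀ i, 0 < p i) (d : ℕ) : Finset (Finset (Fin n) × Trace G) :=
  ((cliquesF G) ×ˢ (TfinLe G p hp d)).filter
    (fun x => (∑ i ∈ x.1, p i) + w G p x.2 = d)

lemma mem_Fset {hp : ∀ i, 0 < p i} {d : ℕ} {x : Finset (Fin n) × Trace G} :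
    x ∈ Fset G p hp d ↔
      G.IsClique (x.1 : Set (Fin n)) ∧ (∑ i ∈ x.1, p i) + w G p x.2 = d := by
  simp only [Fset, Finset.mem_filter, Finset.mem_product, mem_cliquesF, mem_TfinLe]
  constructor
  · rintro ⟨⟨h1, _⟩, h3⟩; exact ⟨h1, h3⟩
  · rintro ⟨h1, h3⟩; exact ⟨⟨h1, by omega⟩, h3⟩

lemma gfun_master {hp : ∀ i, 0 < p i} {d : ℕ} (hd : 0 < d) {x : Finset (Fin n) × Trace G}
    (hx : x ∈ Fset G p hp d) :
    gfun G x ∈ Fset G p hp d ∧ gfun G (gfun G x) = x ∧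
      ((gfun G x).1.card = x.1.card + 1 ∨ x.1.card = (gfun G x).1.card + 1) := by
  obtain ⟨hclq, hsum⟩ := (mem_Fset G p).1 hx
  obtain ⟨S, t⟩ := x
  simp only at hclq hsum
  have hne : (eligSet G S t).Nonempty := by
    rcases Finset.eq_empty_or_nonempty S with hS | ⟨b, hb⟩
    · have hwt : w G p t = d := by rw [hS] at hsum; simpa using hsum
      obtain ⟨a, ha⟩ := exists_front G p (t := t) (by omega)
      exact ⟨a, (mem_eligSet G).2 (Or.inr ⟨ha, by simp [hS]⟩)⟩
    · exact ⟨b, (mem_eligSet G).2 (Or.inl hb)⟩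
  set a := (eligSet G S t).min' hne with ha_def
  have haelig : a ∈ eligSet G S t := Finset.min'_mem _ hne
  by_cases haS : a ∈ S
  · -- move a from S to the trace
    have hg : gfun G (S, t) = (S.erase a, mkT G (FreeMonoid.of a) * t) := by
      rw [gfun, dif_pos hne, if_pos haS]
    have hclq' : G.IsClique ((S.erase a : Finset (Fin n)) : Set (Fin n)) :=
      hclq.subset (Finset.coe_subset.2 (Finset.erase_subset _ _))
    have hsum' : (∑ i ∈ S.erase a, p i) + w G p (mkT G (FreeMonoid.of a) * t) = d := by
      have h1 := Finset.add_sum_erase S p haS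
      rw [w_mul, w_of]
      omega
    have hx' : (S.erase a, mkT G (FreeMonoid.of a) * t) ∈ Fset G p hp d :=
      (mem_Fset G p).2 ⟨hclq', hsum'⟩
    have haelig' : a ∈ eligSet G (S.erase a) (mkT G (FreeMonoid.of a) * t) := by
      refine (mem_eligSet G).2 (Or.inr ⟨front_self_mul G t, fun b hb => ?_⟩)
      obtain ⟨hba, hbS⟩ := Finset.mem_erase.1 hb
      exact hclq (by exact_mod_cast haS) (by exact_mod_cast hbS) (Ne.symm hba)
    have hne' : (eligSet G (S.erase a) (mkT G (FreeMonoid.of a) * t)).Nonempty := ⟨a, haelig'⟩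
    have hmin' : (eligSet G (S.erase a) (mkT G (FreeMonoid.of a) * t)).min' hne' = a := by
      refine le_antisymm (Finset.min'_le _ _ haelig') (Finset.le_min' _ _ _ fun b hb => ?_)
      rcases (mem_eligSet G).1 hb with hbS | ⟨hf, hadjall⟩
      · exact Finset.min'_le _ _ ((mem_eligSet G).2 (Or.inl (Finset.mem_of_mem_erase hbS)))
      · by_cases hba : b = a
        · exact le_of_eq hba.symm
        obtain ⟨s, hs⟩ := hf
        obtain ⟨hadj, hfbt⟩ := frontT_analysis G hs hba
        refine Finset.min'_le _ _ ((mem_eligSet G).2 (Or.inr ⟨hfbt, fun c hc => ?_⟩))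
        by_cases hca : c = a
        · exact hca ▸ hadj.symm
        · exact hadjall c (Finset.mem_erase.2 ⟨hca, hc⟩)
    have hgg : gfun G (S.erase a, mkT G (FreeMonoid.of a) * t) = (S, t) := by
      rw [gfun]
      rw [dif_pos hne']
      rw [if_neg (by rw [hmin']; exact Finset.notMem_erase _ _)]
      rw [hmin']
      have hpop : pop G a (mkT G (FreeMonoid.of a) * t) = t :=
        (cancelT G (pop_spec G (front_self_mul G t)).symm)
      rw [hpop, Finset.insert_erase haS]
    refine ⟨hg ▸ hx', by rw [hg, hgg], Or.inr ?_⟩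
    rw [hg]
    simp only
    rw [Finset.card_erase_of_mem haS]
    have : 0 < S.card := Finset.card_pos.2 ⟨a, haS⟩
    omega
  · -- move a from the trace to S
    obtain ⟨hfat, hadjall⟩ := ((mem_eligSet G).1 haelig).resolve_left haS
    have hspec := pop_spec G hfat
    have hg : gfun G (S, t) = (insert a S, pop G a t) := by
      rw [gfun, dif_pos hne, if_neg haS]
    have hclq' : G.IsClique ((insert a S : Finset (Fin n)) : Set (Fin n)) := by
      rw [Finset.coe_insert]
      exact hclq.insert (fun b hb _ => hadjall b hb)
    have hsum' : (∑ i ∈ insert a S, p i) + w G p (pop G a t) = d := by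
      rw [Finset.sum_insert haS]
      have h2 : w G p t = p a + w G p (pop G a t) := by
        have := congrArg (w G p) hspec
        rwa [w_mul, w_of] at this
      omega
    have hx' : (insert a S, pop G a t) ∈ Fset G p hp d := (mem_Fset G p).2 ⟨hclq', hsum'⟩
    have haelig' : a ∈ eligSet G (insert a S) (pop G a t) :=
      (mem_eligSet G).2 (Or.inl (Finset.mem_insert_self a S))
    have hne' : (eligSet G (insert a S) (pop G a t)).Nonempty := ⟨a, haelig'⟩
    have hmin' : (eligSet G (insert a S) (pop G a t)).min' hne' = a := by
      refine le_antisymm (Finset.min'_le _ _ haelig') (Finset.le_min' _ _ _ fun b hb => ?_)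
      rcases (mem_eligSet G).1 hb with hbS | ⟨hf, hadjall'⟩
      · rcases Finset.mem_insert.1 hbS with rfl | hbS
        · exact le_refl _
        · exact Finset.min'_le _ _ ((mem_eligSet G).2 (Or.inl hbS))
      · by_cases hba : b = a
        · exact le_of_eq hba.symm
        have hadjba : G.Adj b a := hadjall' a (Finset.mem_insert_self a S)
        have hfbt : Front G b t := by
          rw [hspec]
          exact front_mul G hadjba.symm hf
        refine Finset.min'_le _ _ ((mem_eligSet G).2 (Or.inr ⟨hfbt, fun c hc =>
          hadjall' c (Finset.mem_insert_of_mem hc)⟩))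
    have hgg : gfun G (insert a S, pop G a t) = (S, t) := by
      rw [gfun]
      rw [dif_pos hne']
      rw [if_pos (by rw [hmin']; exact Finset.mem_insert_self a S)]
      rw [hmin']
      rw [Finset.erase_insert haS, ← hspec]
    refine ⟨hg ▸ hx', by rw [hg, hgg], Or.inl ?_⟩
    rw [hg]
    simp only
    rw [Finset.card_insert_of_notMem haS]

lemma sum_Fset {hp : ∀ i, 0 < p i} {d : ℕ} (hd : 0 < d) :
    ∑ x ∈ Fset G p hp d, (-1 : ℤ) ^ x.1.card = 0 := by
  apply Finset.sum_involution (fun x _ => gfun G x)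
  · intro x hx
    rcases (gfun_master G p hd hx).2.2 with h | h <;> rw [h] <;> ring
  · intro x hx _
    intro hgx
    rcases (gfun_master G p hd hx).2.2 with h | h <;> rw [hgx] at h <;> omega
  · intro x hx
    exact (gfun_master G p hd hx).1
  · intro x hx
    exact (gfun_master G p hd hx).2.1

-- ######## part 7: coefficient computation #########

lemma common_form (hp : ∀ i, 0 < p i) (d : ℕ) :
    (PowerSeries.coeff d) (hilbertSeries k G p * cliquePoly G p)
      = ∑ x ∈ Fset G p hp d, (-1 : ℤ) ^ x.1.card := by
  rw [PowerSeries.coeff_mul]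
  have hH : ∀ i : ℕ, (PowerSeries.coeff i) (hilbertSeries k G p)
      = ((Tfin G p hp i).card : ℤ) := by
    intro i
    rw [hilbertSeries, PowerSeries.coeff_mk, finrank_degComp G k p hp i]
  have hC : ∀ j : ℕ, (PowerSeries.coeff j) (cliquePoly G p)
      = ∑ S ∈ cliquesF G, (if ∑ i ∈ S, p i = j then (-1 : ℤ) ^ S.card else 0) := by
    intro j
    rw [cliquePoly, PowerSeries.coeff_mk]
    rfl
  calc ∑ y ∈ Finset.HasAntidiagonal.antidiagonal d,
        (PowerSeries.coeff y.1) (hilbertSeries k G p) *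
          (PowerSeries.coeff y.2) (cliquePoly G p)
      = ∑ y ∈ Finset.HasAntidiagonal.antidiagonal d, ∑ S ∈ cliquesF G,
          ((Tfin G p hp y.1).card : ℤ) * (if ∑ i ∈ S, p i = y.2 then (-1 : ℤ) ^ S.card else 0) := by
        refine Finset.sum_congr rfl fun y _ => ?_
        rw [hH, hC, Finset.mul_sum]
    _ = ∑ S ∈ cliquesF G, ∑ y ∈ Finset.HasAntidiagonal.antidiagonal d,
          ((Tfin G p hp y.1).card : ℤ) * (if ∑ i ∈ S, p i = y.2 then (-1 : ℤ) ^ S.card else 0) :=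
        Finset.sum_comm
    _ = ∑ S ∈ cliquesF G, (if ∑ i ∈ S, p i ≤ d then
          ((Tfin G p hp (d - ∑ i ∈ S, p i)).card : ℤ) * (-1 : ℤ) ^ S.card else 0) := by
        refine Finset.sum_congr rfl fun S _ => ?_
        by_cases hle : ∑ i ∈ S, p i ≤ d
        · rw [if_pos hle]
          rw [Finset.sum_eq_single (d - ∑ i ∈ S, p i, ∑ i ∈ S, p i)]
          · rw [if_pos rfl]
          · rintro ⟨i, j⟩ hy hne
            rw [Finset.HasAntidiagonal.mem_antidiagonal] at hy
            by_cases hj : ∑ i ∈ S, p i = j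
            · exfalso
              apply hne
              have hj' : j = ∑ i ∈ S, p i := hj.symm
              subst hj'
              have hi : i = d - ∑ i ∈ S, p i := by omega
              rw [hi]
            · rw [if_neg hj, mul_zero]
          · intro hnot
            exfalso
            exact hnot (Finset.HasAntidiagonal.mem_antidiagonal.2 (by omega))
        · rw [if_neg hle]
          refine Finset.sum_eq_zero fun y hy => ?_
          rw [Finset.HasAntidiagonal.mem_antidiagonal] at hy
          rw [if_neg (by omega), mul_zero]
    _ = ∑ S ∈ cliquesF G, ∑ t ∈ TfinLe G p hp d,
          (if (∑ i ∈ S, p i) + w G p t = d then (-1 : ℤ) ^ S.card else 0) := by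
        refine Finset.sum_congr rfl fun S _ => ?_
        by_cases hle : ∑ i ∈ S, p i ≤ d
        · rw [if_pos hle]
          have hfilter : (TfinLe G p hp d).filter (fun t => (∑ i ∈ S, p i) + w G p t = d)
              = Tfin G p hp (d - ∑ i ∈ S, p i) := by
            ext t
            rw [Finset.mem_filter, mem_TfinLe, mem_Tfin]
            omega
          rw [← Finset.sum_filter, hfilter, Finset.sum_const, nsmul_eq_mul]
        · rw [if_neg hle]
          refine (Finset.sum_eq_zero fun t ht => ?_).symm
          rw [if_neg (by omega)]
    _ = ∑ x ∈ Fset G p hp d, (-1 : ℤ) ^ x.1.card := by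
        rw [Fset, Finset.sum_filter, Finset.sum_product]

lemma Fset_zero (hp : ∀ i, 0 < p i) : Fset G p hp 0 = {((∅ : Finset (Fin n)), (1 : Trace G))} := by
  ext x
  rw [mem_Fset, Finset.mem_singleton]
  constructor
  · rintro ⟨hclq, hsum⟩
    have h1 : ∑ i ∈ x.1, p i = 0 := by omega
    have h2 : w G p x.2 = 0 := by omega
    have hS : x.1 = ∅ := by
      by_contra hne
      obtain ⟨b, hb⟩ := Finset.nonempty_of_ne_empty hne
      have := Finset.single_le_sum (f := p) (fun i _ => Nat.zero_le _) hb
      have := hp b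
      omega
    have ht : x.2 = 1 := eq_one_of_w_zero G p hp h2
    rw [Prod.ext_iff]
    exact ⟨hS, ht⟩
  · rintro rfl
    refine ⟨by simp, by simp [w_one]⟩

end CF

theorem stmt_5 (k : Type*) [Field k] {n : ℕ} (G : SimpleGraph (Fin n))
    (p : Fin n → ℕ) (hp : ∀ i, 0 < p i) :
    hilbertSeries k G p * cliquePoly G p = 1 := by
  ext d
  rw [CF.common_form G k p hp d, PowerSeries.coeff_one]
  rcases Nat.eq_zero_or_pos d with rfl | hd
  · rw [if_pos rfl, CF.Fset_zero G p hp, Finset.sum_singleton]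
    simp
  · rw [if_neg (by omega), CF.sum_Fset G p hd]
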